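/- The iterated integral ∫₀^{1/3} ∫_{x₁}^{(1−x₁)/2} 1/(2·x₂·(1−x₂)·(1−x₁−x₂)) dx₂ dx₁ equals π²/24. -/

import Mathlib

open Real Set MeasureTheory intervalIntegral

noncomputable def myJ (x : ℝ) : ℝ := ∑' n : ℕ, x ^ (n+1) / ((n:ℝ)+1)^2

noncomputable def myD (x : ℝ) : ℝ := ∑' n : ℕ, x ^ n / ((n:ℝ)+1)

lemma summable_inv_sq : Summable (fun n : ℕ => 1 / ((n:ℝ)+1)^2) := by
  have h : Summable (fun n : ℕ => 1 / (n:ℝ)^2) :=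
    Real.summable_one_div_nat_pow.mpr one_lt_two
  have := h.comp_injective Nat.succ_injective
  apply this.congr
  intro n
  simp [Function.comp, Nat.succ_eq_add_one]

lemma myJ_summable {x : ℝ} (hx : |x| ≤ 1) :
    Summable (fun n : ℕ => x ^ (n+1) / ((n:ℝ)+1)^2) := by
  apply Summable.of_norm_bounded summable_inv_sq
  intro n
  rw [norm_div, norm_pow, Real.norm_eq_abs, Real.norm_eq_abs,
    abs_of_nonneg (by positivity : (0:ℝ) ≤ ((n:ℝ)+1)^2)]
  gcongr
  · exact pow_le_one₀ (abs_nonneg x) hx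

lemma myJ_hasDerivAt {x : ℝ} (hx : |x| < 1) : HasDerivAt myJ (myD x) x := by
  set r : ℝ := (1 + |x|)/2 with hr
  have hr1 : r < 1 := by rw [hr]; linarith
  have hr0 : 0 ≤ r := by positivity
  have hxr : |x| < r := by rw [hr]; linarith
  have := hasDerivAt_tsum_of_isPreconnected
    (u := fun n : ℕ => r ^ n)
    (g := fun (n : ℕ) (z : ℝ) => z ^ (n+1) / ((n:ℝ)+1)^2)
    (g' := fun (n : ℕ) (y : ℝ) => y ^ n / ((n:ℝ)+1))
    (summable_geometric_of_lt_one hr0 hr1) (isOpen_Ioo (a := -r) (b := r))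
    (convex_Ioo _ _).isPreconnected
    (fun n y _ => by
      have h1 : HasDerivAt (fun z : ℝ => z ^ (n+1)) (((n:ℝ)+1) * y ^ n) y := by
        simpa using hasDerivAt_pow (n+1) y
      have := h1.div_const (((n:ℝ)+1)^2)
      refine this.congr_deriv ?_
      have hn : ((n:ℝ)+1) ≠ 0 := by positivity
      field_simp)
    (fun n y hy => by
      have hyr : |y| ≤ r := by
        rw [abs_le]; exact ⟨hy.1.le, hy.2.le⟩
      have h1 : |y ^ n / ((n:ℝ)+1)| ≤ |y| ^ n := by
        rw [abs_div, abs_pow]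
        have : (1:ℝ) ≤ |((n:ℝ)+1)| := by
          rw [abs_of_nonneg (by positivity)]; linarith [Nat.cast_nonneg (α := ℝ) n]
        calc |y| ^ n / |((n:ℝ)+1)| ≤ |y| ^ n / 1 := by gcongr
          _ = |y| ^ n := by ring
      calc ‖y ^ n / ((n:ℝ)+1)‖ ≤ |y| ^ n := h1
        _ ≤ r ^ n := by gcongr
    )
    (y₀ := 0) (by
      rw [mem_Ioo]
      constructor
      · rw [neg_lt]; simp only [neg_zero]; rw [hr]; positivity
      · rw [hr]; positivity)
    (by
      apply Summable.of_norm_bounded summable_inv_sq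
      intro n
      simp only [zero_pow (Nat.succ_ne_zero n), zero_div, norm_zero]
      positivity)
    (by rw [mem_Ioo, ← abs_lt]; exact hxr)
  exact this

lemma myD_eq {x : ℝ} (hx : |x| < 1) (hx0 : x ≠ 0) :
    myD x = -Real.log (1 - x) / x := by
  have h := hasSum_pow_div_log_of_abs_lt_one hx
  have h2 : HasSum (fun n : ℕ => x ^ n / ((n:ℝ)+1)) (-Real.log (1-x) / x) := by
    have h3 := h.div_const x
    have he : (fun n : ℕ => x ^ n / ((n:ℝ)+1)) = fun n : ℕ => x ^ (n+1) / ((n:ℝ)+1) / x := by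
      funext n
      rw [pow_succ]
      field_simp
    rwa [he]
  rw [myD, h2.tsum_eq]

lemma myD_zero : myD 0 = 1 := by
  rw [myD]
  rw [tsum_eq_single 0]
  · norm_num
  · intro n hn
    simp [zero_pow hn]

lemma myJ_continuousOn : ContinuousOn myJ (Set.Icc (-1) 1) := by
  apply continuousOn_tsum (u := fun n : ℕ => 1 / ((n:ℝ)+1)^2)
    (fun i => by fun_prop) summable_inv_sq
  intro n x hx
  have : |x| ≤ 1 := abs_le.mpr ⟨hx.1, hx.2⟩
  rw [norm_div, norm_pow, Real.norm_eq_abs, Real.norm_eq_abs,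
    abs_of_nonneg (by positivity : (0:ℝ) ≤ ((n:ℝ)+1)^2)]
  gcongr
  · exact pow_le_one₀ (abs_nonneg x) this

lemma myD_continuousOn : ContinuousOn myD (Set.Icc (-(3/4) : ℝ) (3/4)) := by
  apply continuousOn_tsum (u := fun n : ℕ => (3/4 : ℝ) ^ n)
    (fun i => by fun_prop) (summable_geometric_of_lt_one (by norm_num) (by norm_num))
  intro n x hx
  have hax : |x| ≤ 3/4 := abs_le.mpr ⟨hx.1, hx.2⟩
  rw [norm_div, norm_pow, Real.norm_eq_abs, Real.norm_eq_abs]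
  have h1 : (1:ℝ) ≤ |((n:ℝ)+1)| := by
    rw [abs_of_nonneg (by positivity)]; linarith [Nat.cast_nonneg (α := ℝ) n]
  calc |x| ^ n / |((n:ℝ)+1)| ≤ (3/4) ^ n / 1 := by gcongr
    _ = (3/4) ^ n := by ring

lemma myJ_zero : myJ 0 = 0 := by
  rw [myJ]
  convert tsum_zero with n
  simp [zero_pow (Nat.succ_ne_zero n)]

lemma myJ_one : myJ 1 = Real.pi ^ 2 / 6 := by
  have h := hasSum_zeta_two
  have h2 : HasSum (fun n : ℕ => (1:ℝ) / ((n:ℝ)+1) ^ 2) (Real.pi ^ 2 / 6) := by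
    have h3 := (hasSum_nat_add_iff' (f := fun n : ℕ => (1:ℝ)/(n:ℝ)^2) 1).mpr h
    simp only [Finset.range_one, Finset.sum_singleton, Nat.cast_zero] at h3
    norm_num at h3
    have he : (fun n : ℕ => (1:ℝ) / ((n:ℝ)+1) ^ 2) = fun n : ℕ => 1 / ((n+1 : ℕ):ℝ) ^ 2 := by
      funext n; push_cast; ring
    rw [he]
    simpa [one_div] using h3
  rw [myJ]
  rw [← h2.tsum_eq]
  congr 1 with n
  rw [one_pow]

lemma myN_hasDeriv {t : ℝ} (ht : t ∈ Set.Ioo (0:ℝ) 1) :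
    HasDerivAt (fun x => myJ x + myJ (1-x) + Real.log x * Real.log (1-x)) 0 t := by
  obtain ⟨ht0, ht1⟩ := ht
  have habs : |t| < 1 := abs_lt.mpr ⟨by linarith, ht1⟩
  have habs' : |1 - t| < 1 := abs_lt.mpr ⟨by linarith, by linarith⟩
  have h1 : HasDerivAt myJ (myD t) t := myJ_hasDerivAt habs
  have h2 : HasDerivAt (fun x : ℝ => myJ (1-x)) (-(myD (1-t))) t := by
    have hinner : HasDerivAt (fun x : ℝ => 1 - x) (-1) t := by
      simpa using (hasDerivAt_id t).const_sub 1
    exact ((myJ_hasDerivAt habs').comp t hinner).congr_deriv (by ring)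
  have h3 : HasDerivAt (fun x : ℝ => Real.log x * Real.log (1-x))
      (t⁻¹ * Real.log (1-t) + Real.log t * (-(1-t)⁻¹)) t := by
    have hl1 : HasDerivAt Real.log t⁻¹ t := Real.hasDerivAt_log (ne_of_gt ht0)
    have hl2 : HasDerivAt (fun x : ℝ => Real.log (1-x)) (-(1-t)⁻¹) t := by
      have hinner : HasDerivAt (fun x : ℝ => 1 - x) (-1) t := by
        simpa using (hasDerivAt_id t).const_sub 1
      have := (Real.hasDerivAt_log (ne_of_gt (by linarith : (0:ℝ) < 1 - t))).comp t hinner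
      exact this.congr_deriv (by ring)
    exact hl1.mul hl2
  have := (h1.add h2).add h3
  refine this.congr_deriv ?_
  rw [myD_eq habs (ne_of_gt ht0), myD_eq habs' (ne_of_gt (by linarith : (0:ℝ) < 1 - t))]
  have e1 : (1 : ℝ) - (1 - t) = t := by ring
  rw [e1]
  field_simp
  ring

lemma myN_const {x y : ℝ} (hx : x ∈ Set.Ioo (0:ℝ) 1) (hy : y ∈ Set.Ioo (0:ℝ) 1) :
    myJ x + myJ (1-x) + Real.log x * Real.log (1-x)
      = myJ y + myJ (1-y) + Real.log y * Real.log (1-y) := by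
  set N := fun x => myJ x + myJ (1-x) + Real.log x * Real.log (1-x) with hN
  rcases le_total x y with h | h
  · have := intervalIntegral.integral_eq_sub_of_hasDerivAt (f := N) (f' := fun _ => (0:ℝ))
      (a := x) (b := y) ?_ (intervalIntegrable_const)
    · simp only [intervalIntegral.integral_zero, hN] at this
      linarith [this]
    · intro t htt
      rw [Set.uIcc_of_le h] at htt
      exact myN_hasDeriv ⟨lt_of_lt_of_le hx.1 htt.1, lt_of_le_of_lt htt.2 hy.2⟩
  · have := intervalIntegral.integral_eq_sub_of_hasDerivAt (f := N) (f' := fun _ => (0:ℝ))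
      (a := y) (b := x) ?_ (intervalIntegrable_const)
    · simp only [intervalIntegral.integral_zero, hN] at this
      linarith [this]
    · intro t htt
      rw [Set.uIcc_of_le h] at htt
      exact myN_hasDeriv ⟨lt_of_lt_of_le hy.1 htt.1, lt_of_le_of_lt htt.2 hx.2⟩

lemma myN_tendsto :
    Filter.Tendsto (fun x => myJ x + myJ (1-x) + Real.log x * Real.log (1-x))
      (nhdsWithin 1 (Set.Ioo (0:ℝ) 1)) (nhds (Real.pi ^ 2 / 6)) := by
  have hJ1 : Filter.Tendsto myJ (nhdsWithin 1 (Set.Ioo (0:ℝ) 1)) (nhds (Real.pi ^ 2 / 6)) := by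
    have hc : ContinuousWithinAt myJ (Set.Icc (-1:ℝ) 1) 1 :=
      myJ_continuousOn 1 (by norm_num)
    rw [← myJ_one]
    exact hc.tendsto.mono_left (nhdsWithin_mono 1 (fun t ht => ⟨by linarith [ht.1], ht.2.le⟩))
  have hJ0 : Filter.Tendsto (fun x => myJ (1-x)) (nhdsWithin 1 (Set.Ioo (0:ℝ) 1)) (nhds 0) := by
    have hc : ContinuousAt myJ 0 := (myJ_hasDerivAt (by norm_num)).continuousAt
    have hone : Filter.Tendsto (fun x : ℝ => 1 - x) (nhdsWithin 1 (Set.Ioo (0:ℝ) 1)) (nhds 0) := by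
      have h0 : Filter.Tendsto (fun x : ℝ => 1 - x) (nhds 1) (nhds 0) := by
        have hcont : Continuous (fun x : ℝ => 1 - x) := continuous_const.sub continuous_id
        have := hcont.tendsto (1:ℝ)
        simpa using this
      exact h0.mono_left nhdsWithin_le_nhds
    have := hc.tendsto.comp hone
    rw [myJ_zero] at this
    exact this
  have hlog : Filter.Tendsto (fun x => Real.log x * Real.log (1-x))
      (nhdsWithin 1 (Set.Ioo (0:ℝ) 1)) (nhds 0) := by
    apply squeeze_zero_norm' (a := fun x => 2 * |(1-x) * Real.log (1-x)|)
    · filter_upwards [self_mem_nhdsWithin,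
        eventually_nhdsWithin_of_eventually_nhds (eventually_gt_nhds (by norm_num : (1/2:ℝ) < 1))]
        with x hx hx2
      obtain ⟨hx0, hx1⟩ := hx
      have h1x : 0 < 1 - x := by linarith
      -- |log x| ≤ 2 (1-x) for x ≥ 1/2
      have hlogx : |Real.log x| ≤ 2 * (1 - x) := by
        rw [abs_of_nonpos (Real.log_nonpos (by linarith) (by linarith))]
        have := Real.log_le_sub_one_of_pos (show (0:ℝ) < x⁻¹ by positivity)
        rw [Real.log_inv] at this
        have hxi : x⁻¹ - 1 = (1-x)/x := by field_simp
        rw [hxi] at this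
        have : -Real.log x ≤ (1-x)/x := this
        calc -Real.log x ≤ (1-x)/x := this
          _ ≤ (1-x)/(1/2) := by gcongr
          _ = 2*(1-x) := by ring
      calc ‖Real.log x * Real.log (1-x)‖ = |Real.log x| * |Real.log (1-x)| := abs_mul _ _
        _ ≤ (2*(1-x)) * |Real.log (1-x)| := by gcongr
        _ = 2 * |(1-x) * Real.log (1-x)| := by
            rw [abs_mul, abs_of_nonneg h1x.le]
            ring
    · have hc : Filter.Tendsto (fun x : ℝ => 2 * |(1-x) * Real.log (1-x)|) (nhds 1) (nhds 0) := by
        have h1 : Continuous (fun x : ℝ => 2 * |(1-x) * Real.log (1-x)|) := by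
          have hsub : Continuous (fun x : ℝ => 1 - x) := continuous_const.sub continuous_id
          have habs : Continuous (fun x : ℝ => (1-x) * Real.log (1-x)) :=
            Real.continuous_mul_log.comp hsub
          exact continuous_const.mul habs.abs
        have := h1.tendsto 1
        simpa using this
      exact hc.mono_left nhdsWithin_le_nhds
  have := (hJ1.add hJ0).add hlog
  simpa using this

lemma myJ_half : myJ (1/2) = Real.pi ^ 2 / 12 - (Real.log 2) ^ 2 / 2 := by
  haveI hne : (nhdsWithin (1:ℝ) (Set.Ioo (0:ℝ) 1)).NeBot :=
    IsLUB.nhdsWithin_neBot (isLUB_Ioo (by norm_num)) ⟨1/2, by norm_num⟩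
  have hconst : ∀ x ∈ Set.Ioo (0:ℝ) 1,
      myJ x + myJ (1-x) + Real.log x * Real.log (1-x)
        = myJ (1/2) + myJ (1-1/2) + Real.log (1/2) * Real.log (1-1/2) :=
    fun x hx => myN_const hx (by norm_num)
  have h2 : Filter.Tendsto (fun x : ℝ => myJ (1/2) + myJ (1-1/2) + Real.log (1/2) * Real.log (1-1/2))
      (nhdsWithin 1 (Set.Ioo (0:ℝ) 1)) (nhds (Real.pi ^ 2 / 6)) := by
    apply myN_tendsto.congr'
    filter_upwards [self_mem_nhdsWithin] with x hx
    exact (hconst x hx)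
  have hT := tendsto_nhds_unique h2 tendsto_const_nhds
  have hval : (1:ℝ) - 1/2 = 1/2 := by norm_num
  rw [hval] at hT
  have hlog : Real.log (1/2) = -Real.log 2 := by
    rw [one_div, Real.log_inv]
  rw [hlog] at hT
  nlinarith [hT]

-- the inner integral (in the first coordinate), for 0 < x < 1/2, m = min x (1-2x)
lemma inner_integral_eq {x : ℝ} (hx0 : 0 < x) (hx2 : x < 1/2) :
    ∫ a in (0:ℝ)..(min x (1-2*x)), 1/(2*x*(1-x)*(1-a-x))
      = (Real.log (1-x) - Real.log (1-(min x (1-2*x))-x)) / (2*x*(1-x)) := by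
  set m := min x (1-2*x) with hm
  have hm0 : 0 < m := lt_min hx0 (by linarith)
  have hmx : 1 - m - x > 0 := by
    rcases min_le_iff.mp (le_refl m) with h | h
    all_goals {
      have h1 : m ≤ x := min_le_left _ _
      have h2 : m ≤ 1-2*x := min_le_right _ _
      linarith }
  have hFTC := intervalIntegral.integral_eq_sub_of_hasDerivAt
    (f := fun a => -Real.log (1-a-x) / (2*x*(1-x)))
    (f' := fun a => 1/(2*x*(1-x)*(1-a-x))) (a := 0) (b := m) ?_ ?_
  · rw [hFTC]
    rw [show (1:ℝ)-0-x = 1-x by ring]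
    have h1x : (0:ℝ) < 1 - x := by linarith
    have hne : (2*x*(1-x)) ≠ 0 := by positivity
    field_simp
    ring
  · intro t ht
    rw [Set.uIcc_of_le hm0.le] at ht
    have htm : 1 - t - x > 0 := by
      have := ht.2
      linarith
    have h1 : HasDerivAt (fun a : ℝ => 1-a-x) (-1) t := by
      simpa using ((hasDerivAt_id t).const_sub 1).sub_const x
    have h2 : HasDerivAt (fun a : ℝ => Real.log (1-a-x)) (-(1-t-x)⁻¹) t := by
      have := (Real.hasDerivAt_log (ne_of_gt htm)).comp t h1
      exact this.congr_deriv (by ring)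
    have h3 := (h2.neg).div_const (2*x*(1-x))
    refine h3.congr_deriv ?_
    have h1x : (0:ℝ) < 1 - x := by linarith
    have hxne : (2*x*(1-x)) ≠ 0 := by positivity
    field_simp
  · apply ContinuousOn.intervalIntegrable
    apply ContinuousOn.div continuousOn_const
    · fun_prop
    · intro t ht
      rw [Set.uIcc_of_le hm0.le] at ht
      have h3 : 1 - t - x > 0 := by have := ht.2; linarith
      have h1x : (0:ℝ) < 1 - x := by linarith
      positivity

-- second outer piece
lemma outer_piece_two :
    ∫ x in (1/3:ℝ)..(1/2), (Real.log (1-x) - Real.log x) / (2*x*(1-x))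
      = (Real.log 2)^2 / 4 := by
  have hFTC := intervalIntegral.integral_eq_sub_of_hasDerivAt
    (f := fun x => -(Real.log (1-x) - Real.log x)^2 / 4)
    (f' := fun x => (Real.log (1-x) - Real.log x) / (2*x*(1-x)))
    (a := (1/3:ℝ)) (b := (1/2:ℝ)) ?_ ?_
  · rw [hFTC]
    rw [show (1:ℝ)-1/2 = 1/2 by norm_num, show (1:ℝ)-1/3 = 2/3 by norm_num]
    rw [show Real.log (2/3) - Real.log (1/3) = Real.log 2 by
      rw [Real.log_div (by norm_num) (by norm_num), Real.log_div (by norm_num) (by norm_num),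
        Real.log_one]
      ring]
    rw [show Real.log (1/2) - Real.log (1/2) = 0 by ring]
    ring
  · intro t ht
    rw [Set.uIcc_of_le (by norm_num)] at ht
    have ht1 : (0:ℝ) < t := by have := ht.1; linarith
    have ht2 : (0:ℝ) < 1 - t := by have := ht.2; linarith
    have h1 : HasDerivAt (fun x : ℝ => Real.log (1-x)) (-(1-t)⁻¹) t := by
      have hs : HasDerivAt (fun x : ℝ => 1-x) (-1) t := by
        simpa using (hasDerivAt_id t).const_sub 1
      have := (Real.hasDerivAt_log (ne_of_gt ht2)).comp t hs
      exact this.congr_deriv (by ring)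
    have h2 : HasDerivAt (fun x : ℝ => Real.log x) t⁻¹ t := Real.hasDerivAt_log (ne_of_gt ht1)
    have h3 := (((h1.sub h2).pow 2).neg).div_const 4
    refine h3.congr_deriv ?_
    have : (2:ℕ) - 1 = 1 := rfl
    field_simp
    rw [Pi.sub_apply]; ring
  · apply ContinuousOn.intervalIntegrable
    have hnum : ContinuousOn (fun x : ℝ => Real.log (1-x) - Real.log x)
        (Set.uIcc (1/3:ℝ) (1/2)) := by
      apply ContinuousOn.sub
      · apply ContinuousOn.log (by fun_prop)
        intro t ht
        rw [Set.uIcc_of_le (by norm_num)] at ht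
        have := ht.2; intro hcon; rw [sub_eq_zero] at hcon; rw [← hcon] at this; norm_num at this
      · apply ContinuousOn.log (by fun_prop)
        intro t ht
        rw [Set.uIcc_of_le (by norm_num)] at ht
        have := ht.1; intro hcon; rw [hcon] at this; norm_num at this
    apply ContinuousOn.div hnum
    · fun_prop
    · intro t ht
      rw [Set.uIcc_of_le (by norm_num)] at ht
      have ht1 : (0:ℝ) < t := by have := ht.1; linarith
      have ht2 : (0:ℝ) < 1 - t := by have := ht.2; linarith
      positivity

lemma phi_hasDeriv {t : ℝ} (ht : t < 1) :
    HasDerivAt (fun x : ℝ => x/(1-x)) (1/(1-t)^2) t := by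
  have hne : (1:ℝ) - t ≠ 0 := by intro h; rw [sub_eq_zero] at h; rw [← h] at ht; exact lt_irrefl _ ht
  have h1 : HasDerivAt (fun x : ℝ => x) 1 t := hasDerivAt_id t
  have h2 : HasDerivAt (fun x : ℝ => 1-x) (-1) t := by
    simpa using (hasDerivAt_id t).const_sub 1
  have := h1.div h2 hne
  refine this.congr_deriv ?_
  field_simp
  ring

lemma outer_piece_one :
    ∫ x in (0:ℝ)..(1/3), (1/2) * myD (x/(1-x)) * (1/(1-x)^2) = (1/2) * myJ (1/2) := by
  have hFTC := intervalIntegral.integral_eq_sub_of_hasDerivAt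
    (f := fun x => (1/2) * myJ (x/(1-x)))
    (f' := fun x => (1/2) * myD (x/(1-x)) * (1/(1-x)^2))
    (a := (0:ℝ)) (b := (1/3:ℝ)) ?_ ?_
  · rw [hFTC]
    norm_num [myJ_zero]
  · intro t ht
    rw [Set.uIcc_of_le (by norm_num)] at ht
    obtain ⟨ht0, ht3⟩ := ht
    have ht1 : t < 1 := by linarith
    have hphi0 : 0 ≤ t/(1-t) := by
      apply div_nonneg ht0; linarith
    have hphi2 : t/(1-t) ≤ 1/2 := by
      rw [div_le_div_iff₀ (by linarith) (by norm_num)]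
      linarith
    have habs : |t/(1-t)| < 1 := by
      rw [abs_of_nonneg hphi0]; linarith
    have hJ := myJ_hasDerivAt habs
    have := (hJ.comp t (phi_hasDeriv ht1)).const_mul (1/2:ℝ)
    refine this.congr_deriv ?_
    ring
  · apply ContinuousOn.intervalIntegrable
    apply ContinuousOn.mul
    · apply ContinuousOn.mul continuousOn_const
      have hphi : ContinuousOn (fun x : ℝ => x/(1-x)) (Set.uIcc (0:ℝ) (1/3)) := by
        apply ContinuousOn.div continuousOn_id (by fun_prop)
        intro t ht
        rw [Set.uIcc_of_le (by norm_num)] at ht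
        have := ht.2
        intro hcon; rw [sub_eq_zero] at hcon; rw [← hcon] at this; norm_num at this
      apply myD_continuousOn.comp hphi
      intro t ht
      rw [Set.uIcc_of_le (by norm_num)] at ht
      constructor
      · have := div_nonneg ht.1 (by linarith [ht.2] : (0:ℝ) ≤ 1 - t)
        linarith
      · rw [div_le_div_iff₀ (by linarith [ht.2] : (0:ℝ) < 1 - t) (by norm_num)]
        linarith [ht.1, ht.2]
    · apply ContinuousOn.div continuousOn_const (by fun_prop)
      intro t ht
      rw [Set.uIcc_of_le (by norm_num)] at ht
      have h1 : (0:ℝ) < 1 - t := by linarith [ht.2]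
      positivity

lemma h1_eq_g1 {t : ℝ} (h0 : 0 < t) (h3 : t < 1/2) (h3' : t < 1) :
    (1/2) * myD (t/(1-t)) * (1/(1-t)^2)
      = (Real.log (1-t) - Real.log (1-2*t)) / (2*t*(1-t)) := by
  have h1t : (0:ℝ) < 1 - t := by linarith
  have h12t : (0:ℝ) < 1 - 2*t := by linarith
  have hphi0 : 0 < t/(1-t) := div_pos h0 h1t
  have habs : |t/(1-t)| < 1 := by
    rw [abs_of_nonneg hphi0.le]
    rw [div_lt_one h1t]
    linarith
  rw [myD_eq habs (ne_of_gt hphi0)]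
  have he : 1 - t/(1-t) = (1-2*t)/(1-t) := by field_simp; ring
  rw [he, Real.log_div (ne_of_gt h12t) (ne_of_gt h1t)]
  field_simp
  ring

def brunA : Set (ℝ × ℝ) := {p | 0 < p.1 ∧ p.1 < p.2 ∧ p.2 < (1 - p.1)/2}

noncomputable def brunf : ℝ × ℝ → ℝ := fun p => 1/(2*p.2*(1-p.2)*(1-p.1-p.2))

noncomputable def brunF : ℝ × ℝ → ℝ := brunA.indicator brunf

lemma brunA_measurable : MeasurableSet brunA := by
  apply MeasurableSet.inter
  · exact measurableSet_lt measurable_const measurable_fst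
  · apply MeasurableSet.inter
    · exact measurableSet_lt measurable_fst measurable_snd
    · exact measurableSet_lt measurable_snd (by fun_prop)

lemma brunf_measurable : Measurable brunf := by
  apply Measurable.div measurable_const
  fun_prop

lemma brunF_measurable : Measurable brunF :=
  brunf_measurable.indicator brunA_measurable

-- bound: on brunA with second coordinate x, 0 ≤ f ≤ 3/x
lemma brunf_bound {p : ℝ × ℝ} (hp : p ∈ brunA) : brunf p ∈ Set.Icc 0 (3/p.2) := by
  obtain ⟨h1, h2, h3⟩ := hp
  set a := p.1; set x := p.2
  have hx0 : 0 < x := lt_trans h1 h2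
  have ha3 : a < 1/3 := by nlinarith
  have hx2 : x < 1/2 := by nlinarith
  have hax : 1 - a - x ≥ (1-a)/2 := by nlinarith
  have hax0 : 0 < 1 - a - x := by nlinarith
  have h1x : (0:ℝ) < 1 - x := by linarith
  constructor
  · apply le_of_lt
    rw [brunf]
    positivity
  · rw [brunf]
    rw [div_le_div_iff₀ (by positivity) hx0]
    nlinarith [mul_pos hx0 hax0]

lemma brunA_snd {p : ℝ × ℝ} (hp : p ∈ brunA) : p.2 ∈ Set.Ioo (0:ℝ) (1/2) := by
  obtain ⟨h1, h2, h3⟩ := hp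
  constructor
  · linarith
  · nlinarith

lemma brunA_slice_fst {p : ℝ × ℝ} (hp : p ∈ brunA) :
    p.1 ∈ Set.Ioo (0:ℝ) (min p.2 (1-2*p.2)) := by
  obtain ⟨h1, h2, h3⟩ := hp
  exact ⟨h1, lt_min h2 (by linarith)⟩

lemma brunF_integrable : MeasureTheory.Integrable brunF
    (MeasureTheory.volume.prod MeasureTheory.volume) := by
  constructor
  · exact brunF_measurable.aestronglyMeasurable
  · rw [MeasureTheory.hasFiniteIntegral_def]
    have hmeas : Measurable (fun p : ℝ × ℝ => ‖brunF p‖ₑ) :=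
      brunF_measurable.enorm
    rw [MeasureTheory.lintegral_prod_symm' _ hmeas]
    have hbound : ∀ x : ℝ, (∫⁻ a, (‖brunF (a, x)‖₊ : ENNReal))
        ≤ (Set.Ioo (0:ℝ) (1/2)).indicator (fun _ => (3:ENNReal)) x := by
      intro x
      by_cases hx : x ∈ Set.Ioo (0:ℝ) (1/2)
      · rw [Set.indicator_of_mem hx]
        have hp : ∀ a : ℝ, (‖brunF (a, x)‖₊ : ENNReal)
            ≤ (Set.Ioo (0:ℝ) x).indicator (fun _ => ENNReal.ofReal (3/x)) a := by
          intro a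
          by_cases hmem : (a, x) ∈ brunA
          · have hb := brunf_bound hmem
            have hslice := brunA_slice_fst hmem
            rw [Set.indicator_of_mem (Set.mem_Ioo.mpr ⟨hslice.1,
              lt_of_lt_of_le hslice.2 (min_le_left _ _)⟩)]
            rw [brunF, Set.indicator_of_mem hmem]
            rw [← enorm_eq_nnnorm, ← ofReal_norm, Real.norm_eq_abs,
              abs_of_nonneg hb.1]
            exact ENNReal.ofReal_le_ofReal hb.2
          · rw [brunF, Set.indicator_of_notMem hmem]
            simp
        calc (∫⁻ a, (‖brunF (a, x)‖₊ : ENNReal))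
            ≤ ∫⁻ a, (Set.Ioo (0:ℝ) x).indicator (fun _ => ENNReal.ofReal (3/x)) a :=
              MeasureTheory.lintegral_mono hp
          _ = ENNReal.ofReal (3/x) * MeasureTheory.volume (Set.Ioo (0:ℝ) x) := by
              rw [MeasureTheory.lintegral_indicator measurableSet_Ioo]
              simp [mul_comm]
          _ = ENNReal.ofReal (3/x) * ENNReal.ofReal x := by
              rw [Real.volume_Ioo]; norm_num
          _ = ENNReal.ofReal ((3/x) * x) := by
              rw [ENNReal.ofReal_mul (div_nonneg (by norm_num) hx.1.le)]
          _ ≤ 3 := by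
              rw [div_mul_cancel₀ _ (ne_of_gt hx.1)]
              simp
      · rw [Set.indicator_of_notMem hx]
        have hz : ∀ a : ℝ, brunF (a, x) = 0 := by
          intro a
          rw [brunF, Set.indicator_apply_eq_zero]
          intro hmem
          exact absurd (brunA_snd hmem) hx
        simp only [hz]
        simp
    calc (∫⁻ x, ∫⁻ a, (‖brunF (a, x)‖₊ : ENNReal))
        ≤ ∫⁻ x, (Set.Ioo (0:ℝ) (1/2)).indicator (fun _ => (3:ENNReal)) x :=
          MeasureTheory.lintegral_mono hbound
      _ = 3 * MeasureTheory.volume (Set.Ioo (0:ℝ) (1/2)) := by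
          rw [MeasureTheory.lintegral_indicator measurableSet_Ioo]
          simp [mul_comm]
      _ < ⊤ := by
          rw [Real.volume_Ioo]
          norm_num
          exact ENNReal.mul_lt_top (by norm_num) ENNReal.ofReal_lt_top

lemma step_lhs :
    (∫ x₁ in (0:ℝ)..(1/3), ∫ x₂ in x₁..((1 - x₁)/2),
        1 / (2 * x₂ * (1 - x₂) * (1 - x₁ - x₂)))
      = ∫ a, (∫ x, brunF (a, x)) := by
  rw [intervalIntegral.integral_of_le (by norm_num : (0:ℝ) ≤ 1/3),
    MeasureTheory.integral_Ioc_eq_integral_Ioo]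
  rw [← MeasureTheory.setIntegral_eq_integral_of_forall_compl_eq_zero
    (s := Set.Ioo (0:ℝ) (1/3)) (f := fun a => ∫ x, brunF (a, x)) ?_]
  · apply MeasureTheory.setIntegral_congr_fun measurableSet_Ioo
    intro a ha
    obtain ⟨ha0, ha3⟩ := ha
    have hle : a ≤ (1-a)/2 := by linarith
    simp only
    rw [intervalIntegral.integral_of_le hle, MeasureTheory.integral_Ioc_eq_integral_Ioo]
    rw [← MeasureTheory.integral_indicator measurableSet_Ioo]
    congr 1
    funext x
    by_cases hx : x ∈ Set.Ioo a ((1-a)/2)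
    · rw [Set.indicator_of_mem hx, brunF,
        Set.indicator_of_mem (show (a,x) ∈ brunA from ⟨ha0, hx.1, hx.2⟩)]
      rfl
    · rw [Set.indicator_of_notMem hx, brunF, Set.indicator_of_notMem]
      intro hmem
      exact hx ⟨hmem.2.1, hmem.2.2⟩
  · intro a ha
    have hz : ∀ x, brunF (a, x) = 0 := by
      intro x
      rw [brunF, Set.indicator_apply_eq_zero]
      intro hmem
      exfalso
      obtain ⟨h1, h2, h3⟩ := hmem
      simp only [Set.mem_Ioo, not_and, not_lt] at ha
      have : a < 1/3 := by norm_num at h3 ⊢; linarith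
      exact absurd (ha h1) (not_le.mpr this)
    simp only [hz]
    exact MeasureTheory.integral_zero _ _

lemma step_swap :
    (∫ a, (∫ x, brunF (a, x))) = ∫ x, (∫ a, brunF (a, x)) := by
  apply MeasureTheory.integral_integral_swap
  have : Function.uncurry (fun a x : ℝ => brunF (a, x)) = brunF := by
    funext p
    simp [Function.uncurry]
  rw [this]
  exact brunF_integrable

noncomputable def hfun : ℝ → ℝ := fun x => ∫ a, brunF (a, x)

lemma hfun_zero {x : ℝ} (hx : x ∉ Set.Ioo (0:ℝ) (1/2)) : hfun x = 0 := by
  rw [hfun]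
  have hz : ∀ a, brunF (a, x) = 0 := by
    intro a
    rw [brunF, Set.indicator_apply_eq_zero]
    intro hmem
    exact absurd (brunA_snd hmem) hx
  simp only [hz]
  exact MeasureTheory.integral_zero _ _

lemma hfun_eq {x : ℝ} (hx0 : 0 < x) (hx2 : x < 1/2) :
    hfun x = (Real.log (1-x) - Real.log (1-(min x (1-2*x))-x)) / (2*x*(1-x)) := by
  rw [← inner_integral_eq hx0 hx2, hfun]
  set m := min x (1-2*x) with hm
  have hm0 : 0 < m := lt_min hx0 (by linarith)
  rw [intervalIntegral.integral_of_le hm0.le, MeasureTheory.integral_Ioc_eq_integral_Ioo,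
    ← MeasureTheory.integral_indicator measurableSet_Ioo]
  congr 1
  funext a
  by_cases ha : a ∈ Set.Ioo (0:ℝ) m
  · have hmem : (a, x) ∈ brunA := by
      refine ⟨ha.1, lt_of_lt_of_le ha.2 (min_le_left _ _), ?_⟩
      have := lt_of_lt_of_le ha.2 (min_le_right _ _)
      simp only
      linarith
    rw [brunF, Set.indicator_of_mem hmem, Set.indicator_of_mem ha]
    rfl
  · rw [brunF, Set.indicator_of_notMem, Set.indicator_of_notMem ha]
    intro hmem
    exact ha (brunA_slice_fst hmem)

lemma hfun_integrable : MeasureTheory.Integrable hfun := by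
  have h := brunF_integrable.integral_prod_right
  exact h

lemma step_rhs : (∫ x, (∫ a, brunF (a, x)))
    = (1/2) * myJ (1/2) + (Real.log 2)^2/4 := by
  have hint : (∫ x, (∫ a, brunF (a, x))) = ∫ x, hfun x := rfl
  rw [hint]
  rw [← MeasureTheory.setIntegral_eq_integral_of_forall_compl_eq_zero
    (s := Set.Ioc (0:ℝ) (1/2)) (f := hfun) ?_]
  swap
  · intro x hx
    apply hfun_zero
    intro hcon
    exact hx ⟨hcon.1, hcon.2.le⟩
  have h1 : ∫ x in Set.Ioc (0:ℝ) (1/2), hfun x = ∫ x in (0:ℝ)..(1/2), hfun x := by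
    rw [intervalIntegral.integral_of_le (by norm_num : (0:ℝ) ≤ 1/2)]
  rw [h1]
  have hsplit := intervalIntegral.integral_add_adjacent_intervals
    (a := (0:ℝ)) (b := (1/3:ℝ)) (c := (1/2:ℝ)) (f := hfun) (μ := MeasureTheory.volume)
    hfun_integrable.intervalIntegrable hfun_integrable.intervalIntegrable
  rw [← hsplit]
  have hp1 : ∫ x in (0:ℝ)..(1/3), hfun x
      = ∫ x in (0:ℝ)..(1/3), (1/2) * myD (x/(1-x)) * (1/(1-x)^2) := by
    apply intervalIntegral.integral_congr_ae
    apply MeasureTheory.ae_of_all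
    intro x hx
    rw [Set.uIoc_of_le (by norm_num : (0:ℝ) ≤ 1/3)] at hx
    obtain ⟨hx0, hx3⟩ := hx
    have hx2 : x < 1/2 := by linarith
    rw [hfun_eq hx0 hx2]
    have hmin : min x (1-2*x) = x := min_eq_left (by linarith)
    rw [hmin, h1_eq_g1 hx0 hx2 (by linarith)]
    congr 2
    ring
  have hp2 : ∫ x in (1/3:ℝ)..(1/2), hfun x
      = ∫ x in (1/3:ℝ)..(1/2), (Real.log (1-x) - Real.log x) / (2*x*(1-x)) := by
    apply intervalIntegral.integral_congr_ae
    apply MeasureTheory.ae_of_all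
    intro x hx
    rw [Set.uIoc_of_le (by norm_num : (1/3:ℝ) ≤ 1/2)] at hx
    obtain ⟨hx3, hx2⟩ := hx
    rcases lt_or_eq_of_le hx2 with hlt | heq
    · have hx0 : 0 < x := by linarith
      rw [hfun_eq hx0 hlt]
      have hmin : min x (1-2*x) = 1-2*x := min_eq_right (by linarith)
      rw [hmin]
      congr 2
      ring
    · rw [heq]
      rw [hfun_zero (by simp)]
      rw [show (1:ℝ) - 1/2 = 1/2 by norm_num]
      simp
  rw [hp1, hp2, outer_piece_one, outer_piece_two]

/-- The mass of the Brun invariant density on the sorted part of the simplex: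
`∫₀^{1/3} ∫_{x₁}^{(1-x₁)/2} 1/(2 x₂ (1-x₂) (1-x₁-x₂)) dx₂ dx₁ = π²/24`. -/
theorem stmt_16 :
    (∫ x₁ in (0:ℝ)..(1/3), ∫ x₂ in x₁..((1 - x₁)/2),
        1 / (2 * x₂ * (1 - x₂) * (1 - x₁ - x₂))) = Real.pi ^ 2 / 24 := by
  rw [step_lhs, step_swap, step_rhs, myJ_half]
  ring
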